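/- Let k ≥ 1 and l_{00}, l_{01}, l_{10}, l_{11} ≥ 0 be integers, and for each pair (p₁,p₀) ∈ {0,1}² let v_{p₁p₀,1},…,v_{p₁p₀,l_{p₁p₀}} be positive integers. Set F(q) = (1−q^{4k−2})⁻⁵ · Π_{p₀=0}^{1} Π_{p₁=0}^{1} Π_{i=1}^{l_{p₁p₀}} (1−q^{2v_{p₁p₀,i}})⁻¹ and, for t₀, t₁ ∈ {1,−1}, F̃(q,t₀,t₁) = (1−q^{8k−4})⁻¹ · Π_{p₀=0}^{1} Π_{p₁=0}^{1} [ (1−t₁^{p₁} t₀^{p₀} q^{2k−1})⁻¹ · Π_{i=1}^{l_{p₁p₀}} (1−t₁^{p₁} t₀^{p₀} q^{2v_{p₁p₀,i}})⁻¹ ] in ℚ(q). Then q^{2k−1}·F(q) = (1/8)·Σ_{a=0}^{1} Σ_{b₀=0}^{1} Σ_{b₁=0}^{1} (−1)^a · F̃((−1)^a q, (−1)^{b₀}, (−1)^{b₁}). -/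

import Mathlib

open RatFunc in
lemma aux_sub_ne (n : ℕ) (hn : 0 < n) : (1 - (X : RatFunc ℚ)^n) ≠ 0 := by
  have h : (1 - (X : RatFunc ℚ)^n)
      = algebraMap (Polynomial ℚ) _ (1 - Polynomial.X^n) := by
    simp [map_sub, map_pow, RatFunc.algebraMap_X]
  rw [h, ne_eq, FaithfulSMul.algebraMap_eq_zero_iff]
  intro h2
  have := congrArg (fun p => Polynomial.coeff p n) h2
  simp [Polynomial.coeff_one, hn.ne'] at this

open RatFunc in
lemma aux_add_ne (n : ℕ) (hn : 0 < n) : (1 + (X : RatFunc ℚ)^n) ≠ 0 := by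
  have h : (1 + (X : RatFunc ℚ)^n)
      = algebraMap (Polynomial ℚ) _ (1 + Polynomial.X^n) := by
    simp [map_add, map_pow, RatFunc.algebraMap_X]
  rw [h, ne_eq, FaithfulSMul.algebraMap_eq_zero_iff]
  intro h2
  have := congrArg (fun p => Polynomial.coeff p n) h2
  simp [Polynomial.coeff_one, hn.ne'] at this

lemma key_id {K : Type*} [Field K] [CharZero K] (y : K) (h1 : 1 - y ≠ 0)
    (h2 : 1 + y ≠ 0) (h3 : 1 + y ^ 2 ≠ 0) :
    y * ((1 - y ^ 2) ^ 5)⁻¹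
      = (1 / 8 : K) *
        ((1 - y ^ 4)⁻¹ * ((1 - y)⁻¹ * (1 - y)⁻¹ * ((1 - y)⁻¹ * (1 - y)⁻¹))
          - (1 - y ^ 4)⁻¹ * ((1 + y)⁻¹ * (1 + y)⁻¹ * ((1 + y)⁻¹ * (1 + y)⁻¹))) := by
  have ha : (1 : K) - y ^ 2 ≠ 0 := fun h => (mul_ne_zero h1 h2) (by linear_combination h)
  have hb : (1 : K) - y ^ 4 ≠ 0 := fun h => (mul_ne_zero ha h3) (by linear_combination h)
  have e1 : (1 - y)⁻¹ * (1 - y)⁻¹ * ((1 - y)⁻¹ * (1 - y)⁻¹) = ((1 - y) ^ 4)⁻¹ := by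
    rw [← inv_pow]; ring
  have e2 : (1 + y)⁻¹ * (1 + y)⁻¹ * ((1 + y)⁻¹ * (1 + y)⁻¹) = ((1 + y) ^ 4)⁻¹ := by
    rw [← inv_pow]; ring
  rw [e1, e2, ← mul_inv, ← mul_inv, inv_sub_inv (mul_ne_zero hb (pow_ne_zero _ h1))
    (mul_ne_zero hb (pow_ne_zero _ h2)), ← div_eq_mul_inv, div_mul_div_comm,
    div_eq_div_iff (pow_ne_zero 5 ha) (mul_ne_zero (by norm_num)
      (mul_ne_zero (mul_ne_zero hb (pow_ne_zero _ h1)) (mul_ne_zero hb (pow_ne_zero _ h2))))]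
  ring

open RatFunc in
/-- For `k ≥ 1` and, for each `(p₁,p₀) ∈ {0,1}²`, positive integers `v_{p₁p₀,1}, …,
v_{p₁p₀,l_{p₁p₀}}`, with
`F(q) = (1−q^{4k−2})⁻⁵ Π_{p₀,p₁} Π_i (1−q^{2v_{p₁p₀,i}})⁻¹` and, for `t₀,t₁ ∈ {1,−1}`,
`F̃(q,t₀,t₁) = (1−q^{8k−4})⁻¹ Π_{p₀,p₁} [(1−t₁^{p₁}t₀^{p₀}q^{2k−1})⁻¹
Π_i (1−t₁^{p₁}t₀^{p₀}q^{2v_{p₁p₀,i}})⁻¹]` in `ℚ(q)`, one has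
`q^{2k−1} F(q) = (1/8) Σ_{a,b₀,b₁∈{0,1}} (−1)^a F̃((−1)^a q, (−1)^{b₀}, (−1)^{b₁})`. -/
theorem ratfunc_identity_five (k : ℕ) (hk : 1 ≤ k)
    (l : Fin 2 → Fin 2 → ℕ) (v : (p₁ p₀ : Fin 2) → Fin (l p₁ p₀) → ℕ)
    (hv : ∀ p₁ p₀ i, 0 < v p₁ p₀ i) :
    (X : RatFunc ℚ) ^ (2 * k - 1) *
      (((1 - (X : RatFunc ℚ) ^ (4 * k - 2)) ^ 5)⁻¹ *
        ∏ p₀ : Fin 2, ∏ p₁ : Fin 2, ∏ i, (1 - (X : RatFunc ℚ) ^ (2 * v p₁ p₀ i))⁻¹)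
    = (1 / 8 : RatFunc ℚ) *
        ∑ a ∈ Finset.range 2, ∑ b₀ ∈ Finset.range 2, ∑ b₁ ∈ Finset.range 2,
          (-1 : RatFunc ℚ) ^ a *
          ((1 - ((-1 : RatFunc ℚ) ^ a * X) ^ (8 * k - 4))⁻¹ *
            ∏ p₀ : Fin 2, ∏ p₁ : Fin 2,
              ((1 - ((-1 : RatFunc ℚ) ^ b₁) ^ (p₁ : ℕ) * ((-1 : RatFunc ℚ) ^ b₀) ^ (p₀ : ℕ) *
                  ((-1 : RatFunc ℚ) ^ a * X) ^ (2 * k - 1))⁻¹ *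
                ∏ i, (1 - ((-1 : RatFunc ℚ) ^ b₁) ^ (p₁ : ℕ) * ((-1 : RatFunc ℚ) ^ b₀) ^ (p₀ : ℕ) *
                  ((-1 : RatFunc ℚ) ^ a * X) ^ (2 * v p₁ p₀ i))⁻¹)) := by
  have hXm : ∀ n : ℕ, (-(X : RatFunc ℚ)) ^ (2 * n) = X ^ (2 * n) := fun n =>
    Even.neg_pow (even_two_mul n) _
  have hX84 : (-(X : RatFunc ℚ)) ^ (8 * k - 4) = X ^ (8 * k - 4) :=
    Even.neg_pow ⟨4 * k - 2, by omega⟩ _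
  have hXodd : (-(X : RatFunc ℚ)) ^ (2 * k - 1) = -(X ^ (2 * k - 1)) :=
    Odd.neg_pow ⟨k - 1, by omega⟩ _
  have e1 : (X : RatFunc ℚ) ^ (4 * k - 2) = (X ^ (2 * k - 1)) ^ 2 := by
    rw [← pow_mul]; congr 1; omega
  have e2 : (X : RatFunc ℚ) ^ (8 * k - 4) = (X ^ (2 * k - 1)) ^ 4 := by
    rw [← pow_mul]; congr 1; omega
  have h1 : (1 : RatFunc ℚ) - X ^ (2 * k - 1) ≠ 0 := aux_sub_ne _ (by omega)
  have h2 : (1 : RatFunc ℚ) + X ^ (2 * k - 1) ≠ 0 := aux_add_ne _ (by omega)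
  have h3 : (1 : RatFunc ℚ) + (X ^ (2 * k - 1)) ^ 2 ≠ 0 := by
    rw [← pow_mul]; exact aux_add_ne _ (by omega)
  simp only [Fin.prod_univ_two, Finset.sum_range_succ, Finset.sum_range_zero,
    pow_zero, pow_one, one_mul, zero_add, Fin.val_zero, Fin.val_one, neg_one_mul,
    hXm, hX84, hXodd, one_pow, neg_neg, mul_one, sub_neg_eq_add, mul_neg,
    ← sub_eq_add_neg, e1, e2]
  have : CharZero (RatFunc ℚ) :=
    IsFractionRing.charZero_of_isFractionRing (Polynomial ℚ)
  have hkey := key_id (X ^ (2 * k - 1) : RatFunc ℚ) h1 h2 h3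
  linear_combination ((∏ i : Fin (l 0 0), (1 - (X : RatFunc ℚ) ^ (2 * v 0 0 i))⁻¹) *
    (∏ i : Fin (l 1 0), (1 - (X : RatFunc ℚ) ^ (2 * v 1 0 i))⁻¹) *
    ((∏ i : Fin (l 0 1), (1 - (X : RatFunc ℚ) ^ (2 * v 0 1 i))⁻¹) *
      (∏ i : Fin (l 1 1), (1 - (X : RatFunc ℚ) ^ (2 * v 1 1 i))⁻¹))) * hkey
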